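/- Let a < b be real numbers, r and ℓ natural numbers with r + ℓ ≥ 1, and H > 0 with H(r+ℓ) ≤ b − a. Define the shifting function λ : [a,b] → ℝ by λ(x) = min{0, −(r+ℓ)/2 + (x−a)/H} for x ∈ [a, (a+b)/2) and λ(x) = max{0, (r+ℓ)/2 + (x−b)/H} for x ∈ [(a+b)/2, b]. Then for every x ∈ [a,b], the interval [x − H(λ(x) + (r+ℓ)/2), x − H(λ(x) − (r+ℓ)/2)] is contained in [a,b]. -/
import Mathlib


theorem stmt_12 (a b : ℝ) (hab : a < b) (r ℓ : ℕ) (hrℓ : 1 ≤ r + ℓ)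
    (H : ℝ) (hH : 0 < H) (hHab : H * ((r : ℝ) + ℓ) ≤ b - a)
    (lam : ℝ → ℝ)
    (hlam₁ : ∀ x ∈ Set.Ico a ((a + b) / 2),
      lam x = min 0 (-(((r : ℝ) + ℓ) / 2) + (x - a) / H))
    (hlam₂ : ∀ x ∈ Set.Icc ((a + b) / 2) b,
      lam x = max 0 (((r : ℝ) + ℓ) / 2 + (x - b) / H)) :
    ∀ x ∈ Set.Icc a b,
      Set.Icc (x - H * (lam x + ((r : ℝ) + ℓ) / 2)) (x - H * (lam x - ((r : ℝ) + ℓ) / 2)) ⊆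
        Set.Icc a b := by
  intro x hx y hy
  obtain ⟨hx1, hx2⟩ := hx
  obtain ⟨hy1, hy2⟩ := hy
  have hA : H * ((x - a) / H) = x - a := by field_simp
  have hB : H * ((x - b) / H) = x - b := by field_simp
  rcases lt_or_ge x ((a + b) / 2) with hc | hc
  · rw [hlam₁ x ⟨hx1, hc⟩] at hy1 hy2
    rcases min_cases (0:ℝ) (-(((r : ℝ) + ℓ) / 2) + (x - a) / H) with ⟨he, hle⟩ | ⟨he, hle⟩
    · rw [he] at hy1 hy2
      constructor <;> nlinarith [mul_le_mul_of_nonneg_left hle hH.le]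
    · rw [he] at hy1 hy2
      constructor <;> nlinarith [mul_le_mul_of_nonneg_left hle.le hH.le]
  · rw [hlam₂ x ⟨hc, hx2⟩] at hy1 hy2
    rcases max_cases (0:ℝ) (((r : ℝ) + ℓ) / 2 + (x - b) / H) with ⟨he, hle⟩ | ⟨he, hle⟩
    · rw [he] at hy1 hy2
      constructor <;> nlinarith [mul_le_mul_of_nonneg_left hle hH.le]
    · rw [he] at hy1 hy2
      constructor <;> nlinarith [mul_le_mul_of_nonneg_left hle.le hH.le]
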